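/- For all integers n, Δ with 0 < Δ < n − 1, the strict inequality (n−Δ)!/C(n,Δ) < n!/|B(Δ)| holds, where B(Δ) is the Ulam ball of radius Δ around the identity; for all 0 ≤ Δ ≤ n the non-strict inequality holds. -/

import Mathlib

/-- One-line notation of a permutation of `Fin n`. -/
def oneLine {n : ℕ} (σ : Equiv.Perm (Fin n)) : List (Fin n) := List.ofFn σ

/-- A translocation: the permutation obtained from the identity by removing the
symbol at position `i` and inserting it at another position `j`. -/
def IsTranslocation {n : ℕ} (τ : Equiv.Perm (Fin n)) : Prop :=
  ∃ i j : Fin n, i ≠ j ∧ oneLine τ = (((List.finRange n).eraseIdx i).insertIdx j i)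

namespace GVAux

def tfun {n : ℕ} (i j : Fin n) : Fin n → Fin n := fun k =>
  if (k : ℕ) = (j : ℕ) then i
  else if h2 : (i : ℕ) ≤ (k : ℕ) ∧ (k : ℕ) < (j : ℕ) then ⟨(k : ℕ) + 1, lt_of_le_of_lt h2.2 j.isLt⟩
  else if (j : ℕ) < (k : ℕ) ∧ (k : ℕ) ≤ (i : ℕ) then
    ⟨(k : ℕ) - 1, lt_of_le_of_lt (Nat.sub_le _ _) k.isLt⟩
  else k

lemma tfun_val {n : ℕ} (i j k : Fin n) :
    ((tfun i j k : Fin n) : ℕ) =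
      if (k : ℕ) = (j : ℕ) then (i : ℕ)
      else if (i : ℕ) ≤ (k : ℕ) ∧ (k : ℕ) < (j : ℕ) then (k : ℕ) + 1
      else if (j : ℕ) < (k : ℕ) ∧ (k : ℕ) ≤ (i : ℕ) then (k : ℕ) - 1
      else (k : ℕ) := by
  unfold tfun; split_ifs <;> rfl

lemma tfun_injective {n : ℕ} (i j : Fin n) : Function.Injective (tfun i j) := by
  intro a b hab
  have := congrArg Fin.val hab
  rw [tfun_val, tfun_val] at this
  have ha := a.isLt; have hb := b.isLt; have hi := i.isLt; have hj := j.isLt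
  apply Fin.val_injective
  split_ifs at this <;> omega

noncomputable def transloc {n : ℕ} (i j : Fin n) : Equiv.Perm (Fin n) :=
  Equiv.ofBijective (tfun i j) (Finite.injective_iff_bijective.mp (tfun_injective i j))

lemma transloc_apply {n : ℕ} (i j k : Fin n) : transloc i j k = tfun i j k := rfl

lemma swap_val {n : ℕ} (x y k : Fin n) :
    ((Equiv.swap x y k : Fin n) : ℕ) =
      if (k : ℕ) = (x : ℕ) then (y : ℕ) else if (k : ℕ) = (y : ℕ) then (x : ℕ) else (k : ℕ) := by
  rw [Equiv.swap_apply_def]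
  split_ifs with h1 h2 h3 h4 h5 <;> simp_all [Fin.ext_iff]

lemma swap_decomp {n : ℕ} (x y : Fin n) (hxy : (x : ℕ) < (y : ℕ)) :
    Equiv.swap x y =
      transloc x y * transloc ⟨(y : ℕ) - 1, lt_of_le_of_lt (Nat.sub_le _ _) y.isLt⟩ x := by
  ext k
  have hk := k.isLt; have hx := x.isLt; have hy := y.isLt
  rw [Equiv.Perm.mul_apply, transloc_apply, transloc_apply, swap_val, tfun_val, tfun_val]
  simp only [Fin.val_mk]
  split_ifs <;> omega

end GVAux

namespace GVAux

lemma length_work {n : ℕ} (i : Fin n) : (((List.finRange n).eraseIdx (i : ℕ)).length) = n - 1 := by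
  rw [List.length_eraseIdx]
  simp [i.isLt]

lemma ofFn_tfun {n : ℕ} (i j : Fin n) :
    List.ofFn (tfun i j) = (((List.finRange n).eraseIdx (i : ℕ)).insertIdx (j : ℕ) i) := by
  have hi := i.isLt; have hj := j.isLt
  have hn : 0 < n := Nat.lt_of_le_of_lt (Nat.zero_le _) hi
  have hl : (((List.finRange n).eraseIdx (i : ℕ)).length) = n - 1 := length_work i
  have hjle : (j : ℕ) ≤ ((List.finRange n).eraseIdx (i : ℕ)).length := by omega
  apply List.ext_getElem
  · rw [List.length_ofFn, List.length_insertIdx_of_le_length hjle]; omega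
  · intro k h1 h2
    rw [List.length_ofFn] at h1
    rw [List.getElem_ofFn]
    rcases lt_trichotomy k (j : ℕ) with hk | hk | hk
    · rw [List.getElem_insertIdx_of_lt hk h2, List.getElem_eraseIdx]
      apply Fin.eq_of_val_eq
      rw [tfun_val]
      split_ifs <;> simp_all [List.getElem_finRange, Fin.ext_iff] <;> omega
    · subst hk
      rw [List.getElem_insertIdx_self h2]
      apply Fin.eq_of_val_eq
      rw [tfun_val]
      simp
    · rw [List.getElem_insertIdx_of_gt hk h2, List.getElem_eraseIdx]
      apply Fin.eq_of_val_eq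
      rw [tfun_val]
      split_ifs <;> simp_all [List.getElem_finRange, Fin.ext_iff] <;> omega

end GVAux

namespace GVAux

lemma transloc_strictMonoOn {n : ℕ} (τ : Equiv.Perm (Fin n)) (h : IsTranslocation τ) :
    ∃ j : Fin n, ∀ p q : Fin n, p ≠ j → q ≠ j → p < q → τ p < τ q := by
  obtain ⟨i, j, hij, hone⟩ := h
  refine ⟨j, ?_⟩
  intro p q hp hq hpq
  have hi := i.isLt; have hj := j.isLt; have hpn := p.isLt; have hqn := q.isLt
  have hn : 0 < n := Nat.lt_of_le_of_lt (Nat.zero_le _) hi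
  set l := (List.finRange n).eraseIdx (i : ℕ) with hldef
  have hllen : l.length = n - 1 := length_work i
  have hLlen : (l.insertIdx (j : ℕ) i).length = n := by
    rw [List.length_insertIdx_of_le_length (by omega)]; omega
  have hval : ∀ r : Fin n, τ r = (l.insertIdx (j : ℕ) i)[(r : ℕ)]'(by omega) := by
    intro r
    calc τ r = (List.ofFn ⇑τ)[(r : ℕ)]'(by simp) := by simp
      _ = _ := getElem_congr_coll hone
  have sorted : l.Pairwise (· < ·) :=
    List.Pairwise.sublist (List.eraseIdx_sublist _ _) (List.pairwise_lt_finRange n)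
  have getmono := List.pairwise_iff_getElem.mp sorted
  have hpq' : (p : ℕ) < (q : ℕ) := hpq
  have hpj : (p : ℕ) ≠ (j : ℕ) := fun hc => hp (Fin.eq_of_val_eq hc)
  have hqj : (q : ℕ) ≠ (j : ℕ) := fun hc => hq (Fin.eq_of_val_eq hc)
  rw [hval p, hval q]
  rcases Nat.lt_or_ge (p : ℕ) (j : ℕ) with hp' | hp'
  · rcases Nat.lt_or_ge (q : ℕ) (j : ℕ) with hq' | hq'
    · rw [List.getElem_insertIdx_of_lt hp' (by omega),
        List.getElem_insertIdx_of_lt hq' (by omega)]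
      exact getmono _ _ _ (by omega) hpq'
    · have hq'' : (j : ℕ) < (q : ℕ) := by omega
      rw [List.getElem_insertIdx_of_lt hp' (by omega),
        List.getElem_insertIdx_of_gt hq'' (by omega)]
      exact getmono _ _ _ (by omega) (by omega)
  · have hp'' : (j : ℕ) < (p : ℕ) := by omega
    have hq'' : (j : ℕ) < (q : ℕ) := by omega
    rw [List.getElem_insertIdx_of_gt hp'' (by omega),
      List.getElem_insertIdx_of_gt hq'' (by omega)]
    exact getmono _ _ _ (by omega) (by omega)

end GVAux

namespace GVAux

lemma isTranslocation_transloc {n : ℕ} (i j : Fin n) (h : i ≠ j) :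
    IsTranslocation (transloc i j) := by
  refine ⟨i, j, h, ?_⟩
  have he : ⇑(transloc i j) = tfun i j := rfl
  rw [oneLine, he, ofFn_tfun]

lemma transloc_self {n : ℕ} (i : Fin n) : transloc i i = 1 := by
  ext k
  rw [show ((transloc i i) k : ℕ) = ((tfun i i k : Fin n) : ℕ) from rfl, tfun_val]
  have := k.isLt
  split_ifs <;> simp <;> omega

lemma exists_list_swap {n : ℕ} (x y : Fin n) (hne : x ≠ y) :
    ∃ L : List (Equiv.Perm (Fin n)), (∀ τ ∈ L, IsTranslocation τ) ∧ Equiv.swap x y = L.prod := by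
  wlog hxy : (x : ℕ) < (y : ℕ) generalizing x y
  · obtain ⟨L, h1, h2⟩ := this y x (Ne.symm hne)
      (by rcases Nat.lt_or_ge (y : ℕ) (x : ℕ) with h | h;
          · exact h
          · exact absurd (Fin.eq_of_val_eq (by omega : (x : ℕ) = (y : ℕ))) hne)
    exact ⟨L, h1, by rw [Equiv.swap_comm]; exact h2⟩
  have hdec := swap_decomp x y hxy
  by_cases hadj : (y : ℕ) - 1 = (x : ℕ)
  · refine ⟨[transloc x y], ?_, ?_⟩
    · intro τ hτ
      rw [List.mem_singleton] at hτ
      subst hτ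
      exact isTranslocation_transloc x y hne
    · rw [List.prod_singleton, hdec,
        show (⟨(y : ℕ) - 1, _⟩ : Fin n) = x from Fin.eq_of_val_eq hadj, transloc_self, mul_one]
  · refine ⟨[transloc x y, transloc ⟨(y : ℕ) - 1, lt_of_le_of_lt (Nat.sub_le _ _) y.isLt⟩ x], ?_, ?_⟩
    · intro τ hτ
      rw [List.mem_cons, List.mem_singleton] at hτ
      rcases hτ with h | h <;> subst h
      · exact isTranslocation_transloc x y hne
      · exact isTranslocation_transloc _ _ (fun hc => hadj (congrArg Fin.val hc))
    · simpa using hdec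

lemma exists_list_perm {n : ℕ} (σ : Equiv.Perm (Fin n)) :
    ∃ L : List (Equiv.Perm (Fin n)), (∀ τ ∈ L, IsTranslocation τ) ∧ σ = L.prod := by
  refine Equiv.Perm.swap_induction_on σ ⟨[], by simp, by simp⟩ ?_
  intro f x y hxy ih
  obtain ⟨L, hL, hLp⟩ := ih
  obtain ⟨M, hM, hMp⟩ := exists_list_swap x y hxy
  refine ⟨M ++ L, ?_, ?_⟩
  · intro τ hτ
    rcases List.mem_append.mp hτ with h | h
    exacts [hM τ h, hL τ h]
  · rw [List.prod_append, ← hLp, ← hMp]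

lemma exists_strictMonoOn_of_list {n : ℕ} (L : List (Equiv.Perm (Fin n)))
    (hL : ∀ τ ∈ L, IsTranslocation τ) :
    ∃ A : Finset (Fin n), n ≤ A.card + L.length ∧ StrictMonoOn ⇑L.prod (A : Set (Fin n)) := by
  induction L with
  | nil =>
    refine ⟨Finset.univ, by simp, ?_⟩
    intro a _ b _ hab
    simpa using hab
  | cons τ L ih =>
    obtain ⟨A, hAcard, hA⟩ := ih (fun x hx => hL x (List.mem_cons_of_mem _ hx))
    obtain ⟨j, hj⟩ := transloc_strictMonoOn τ (hL τ List.mem_cons_self)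
    refine ⟨A.erase (L.prod⁻¹ j), ?_, ?_⟩
    · have := Finset.pred_card_le_card_erase (s := A) (a := L.prod⁻¹ j)
      simp only [List.length_cons]
      omega
    · intro a ha b hb hab
      simp only [Finset.coe_erase, Set.mem_diff, Finset.mem_coe, Set.mem_singleton_iff] at ha hb
      have ha' : L.prod a ≠ j := fun hc => ha.2 (by rw [← hc]; simp)
      have hb' : L.prod b ≠ j := fun hc => hb.2 (by rw [← hc]; simp)
      rw [List.prod_cons]
      simp only [Equiv.Perm.mul_apply]
      exact hj _ _ ha' hb' (hA ha.1 hb.1 hab)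

end GVAux

namespace GVAux

lemma strictMonoOn_eq_of_image_eq {n : ℕ} {A : Finset (Fin n)} {f g : Fin n → Fin n}
    (hf : StrictMonoOn f (A : Set (Fin n))) (hg : StrictMonoOn g (A : Set (Fin n)))
    (himg : A.image f = A.image g) : ∀ a ∈ A, f a = g a := by
  have hcardf : (A.image f).card = A.card :=
    Finset.card_image_of_injOn (hf.injOn)
  have hF : StrictMono (fun t : Fin A.card => f (A.orderEmbOfFin rfl t)) := by
    intro s t hst
    exact hf (Finset.orderEmbOfFin_mem _ _ _) (Finset.orderEmbOfFin_mem _ _ _)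
      ((A.orderEmbOfFin rfl).strictMono hst)
  have hG : StrictMono (fun t : Fin A.card => g (A.orderEmbOfFin rfl t)) := by
    intro s t hst
    exact hg (Finset.orderEmbOfFin_mem _ _ _) (Finset.orderEmbOfFin_mem _ _ _)
      ((A.orderEmbOfFin rfl).strictMono hst)
  have hFeq := Finset.orderEmbOfFin_unique (s := A.image f) (hcardf)
    (f := fun t : Fin A.card => f (A.orderEmbOfFin rfl t))
    (fun t => Finset.mem_image_of_mem f (Finset.orderEmbOfFin_mem _ _ _)) hF
  have hGeq := Finset.orderEmbOfFin_unique (s := A.image f) hcardf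
    (f := fun t : Fin A.card => g (A.orderEmbOfFin rfl t))
    (fun t => by rw [himg]; exact Finset.mem_image_of_mem g (Finset.orderEmbOfFin_mem _ _ _)) hG
  intro a ha
  have : a ∈ Set.range (A.orderEmbOfFin rfl) := by
    rw [Finset.range_orderEmbOfFin]
    exact_mod_cast ha
  obtain ⟨t, rfl⟩ := this
  have h1 := congrFun hFeq t
  have h2 := congrFun hGeq t
  rw [h1, h2]

lemma image_compl_perm {n : ℕ} (σ : Equiv.Perm (Fin n)) (C : Finset (Fin n)) :
    Cᶜ.image ⇑σ = (C.image ⇑σ)ᶜ := by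
  apply Finset.eq_of_subset_of_card_le
  · intro x hx
    obtain ⟨a, ha, rfl⟩ := Finset.mem_image.mp hx
    rw [Finset.mem_compl] at ha ⊢
    intro hc
    obtain ⟨b, hb, he⟩ := Finset.mem_image.mp hc
    exact ha (σ.injective he ▸ hb)
  · rw [Finset.card_image_of_injective _ σ.injective, Finset.card_compl, Finset.card_compl,
      Finset.card_image_of_injective _ σ.injective]

end GVAux

namespace GVAux

lemma orderEmbOfFin_congr {α : Type*} [LinearOrder α] {s t : Finset α} (h : s = t) {k : ℕ}
    (hs : s.card = k) : s.orderEmbOfFin hs = t.orderEmbOfFin (h ▸ hs) := by subst h; rfl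

open Classical in
lemma count_bound (n Δ : ℕ) (hΔ : Δ ≤ n) :
    ({σ : Equiv.Perm (Fin n) |
        ∃ A : Finset (Fin n), A.card = n - Δ ∧ StrictMonoOn ⇑σ (A : Set (Fin n))}.ncard
      ≤ n.choose Δ * (Δ.factorial * n.choose Δ)) ∧
    (0 < Δ → Δ + 1 < n →
      {σ : Equiv.Perm (Fin n) |
        ∃ A : Finset (Fin n), A.card = n - Δ ∧ StrictMonoOn ⇑σ (A : Set (Fin n))}.ncard
      < n.choose Δ * (Δ.factorial * n.choose Δ)) := by
  classical
  set P : Set (Equiv.Perm (Fin n)) :=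
    {σ | ∃ A : Finset (Fin n), A.card = n - Δ ∧ StrictMonoOn ⇑σ (A : Set (Fin n))} with hPdef
  have hmem : ∀ σ : ↥P, ∃ A : Finset (Fin n),
      A.card = n - Δ ∧ StrictMonoOn ⇑σ.1 (A : Set (Fin n)) := fun σ => σ.2
  let pick : ↥P → Finset (Fin n) := fun σ => (hmem σ).choose
  have pick_card : ∀ σ, (pick σ).card = n - Δ := fun σ => (hmem σ).choose_spec.1
  have pick_mono : ∀ σ : ↥P, StrictMonoOn ⇑σ.1 ((pick σ) : Set (Fin n)) :=
    fun σ => (hmem σ).choose_spec.2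
  let C : ↥P → Finset (Fin n) := fun σ => (pick σ)ᶜ
  have hC : ∀ σ, (C σ).card = Δ := by
    intro σ
    rw [Finset.card_compl, pick_card, Fintype.card_fin]
    omega
  let Φ : ↥P → {C : Finset (Fin n) // C.card = Δ} × (Fin Δ ↪ Fin n) := fun σ =>
    (⟨C σ, hC σ⟩, ⟨fun t => σ.1 ((C σ).orderEmbOfFin (hC σ) t),
      fun s t hst => ((C σ).orderEmbOfFin (hC σ)).injective (σ.1.injective hst)⟩)
  -- key: injectivity
  have hΦinj : Function.Injective Φ := by
    intro σ₁ σ₂ h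
    have hfst : C σ₁ = C σ₂ := congrArg (fun p => p.1.1) h
    have hAeq : pick σ₁ = pick σ₂ := by
      have := congrArg (·ᶜ) hfst
      simpa [C, compl_compl] using this
    have hCfix : ∀ c ∈ C σ₁, σ₁.1 c = σ₂.1 c := by
      intro c hc
      have : c ∈ Set.range ((C σ₁).orderEmbOfFin (hC σ₁)) := by
        rw [Finset.range_orderEmbOfFin]; exact_mod_cast hc
      obtain ⟨t, rfl⟩ := this
      have h2 := congrArg (fun p => p.2.toFun t) h
      simp only [Φ] at h2
      rwa [orderEmbOfFin_congr hfst.symm (hC σ₂)] at h2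
    have himgC : (C σ₁).image ⇑σ₁.1 = (C σ₁).image ⇑σ₂.1 := Finset.image_congr hCfix
    have himgA : (pick σ₁).image ⇑σ₁.1 = (pick σ₁).image ⇑σ₂.1 := by
      have e1 : (C σ₁)ᶜ = pick σ₁ := compl_compl _
      have e2 : (C σ₂)ᶜ = pick σ₂ := compl_compl _
      calc (pick σ₁).image ⇑σ₁.1 = (C σ₁)ᶜ.image ⇑σ₁.1 := by rw [e1]
        _ = ((C σ₁).image ⇑σ₁.1)ᶜ := image_compl_perm _ _
        _ = ((C σ₂).image ⇑σ₂.1)ᶜ := by rw [himgC, hfst]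
        _ = (C σ₂)ᶜ.image ⇑σ₂.1 := (image_compl_perm _ _).symm
        _ = (pick σ₁).image ⇑σ₂.1 := by rw [e2, hAeq]
    have hAfix := strictMonoOn_eq_of_image_eq (pick_mono σ₁)
      (by rw [hAeq] at *; exact pick_mono σ₂) himgA
    apply Subtype.ext
    apply Equiv.ext
    intro k
    by_cases hk : k ∈ pick σ₁
    · exact hAfix k hk
    · exact hCfix k (Finset.mem_compl.mpr hk)
  have hTcard : Fintype.card ({C : Finset (Fin n) // C.card = Δ} × (Fin Δ ↪ Fin n)) =
      n.choose Δ * (Δ.factorial * n.choose Δ) := by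
    rw [Fintype.card_prod, Fintype.card_finset_len, Fintype.card_embedding_eq,
      Fintype.card_fin, Fintype.card_fin, Nat.descFactorial_eq_factorial_mul_choose]
  letI : Fintype ↥P := (Set.toFinite P).fintype
  have hncard : P.ncard = Fintype.card ↥P := by
    rw [← Nat.card_coe_set_eq, Nat.card_eq_fintype_card]
  constructor
  · rw [hncard, ← hTcard]
    exact Fintype.card_le_of_injective Φ hΦinj
  · intro hΔpos hΔn
    -- identity is in P
    have h1P : (1 : Equiv.Perm (Fin n)) ∈ P := by
      obtain ⟨A, -, hAcard⟩ := Finset.exists_subset_card_eq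
        (show n - Δ ≤ (Finset.univ : Finset (Fin n)).card by simp)
      exact ⟨A, hAcard, by intro a _ b _ hab; simpa using hab⟩
    set σ0 : ↥P := ⟨1, h1P⟩ with hσ0
    -- a Δ-set different from C σ0
    have hx : ∃ x, x ∉ C σ0 := by
      by_contra hc
      push_neg at hc
      have he : (C σ0) = Finset.univ := Finset.eq_univ_of_forall hc
      have hcu := hC σ0
      rw [he, Finset.card_univ, Fintype.card_fin] at hcu
      omega
    obtain ⟨x, hx⟩ := hx
    have hy : ∃ y, y ∈ C σ0 := by
      have : 0 < (C σ0).card := by rw [hC σ0]; omega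
      obtain ⟨y, hy⟩ := Finset.card_pos.mp this
      exact ⟨y, hy⟩
    obtain ⟨y, hy⟩ := hy
    set C₁ : Finset (Fin n) := insert x ((C σ0).erase y) with hC₁def
    have hxe : x ∉ (C σ0).erase y := fun hc => hx (Finset.mem_of_mem_erase hc)
    have hC₁card : C₁.card = Δ := by
      rw [hC₁def, Finset.card_insert_of_notMem hxe, Finset.card_erase_of_mem hy, hC σ0]
      omega
    have hC₁ne : C₁ ≠ C σ0 := fun hc => hx (hc ▸ Finset.mem_insert_self x _)
    set bad : {C : Finset (Fin n) // C.card = Δ} × (Fin Δ ↪ Fin n) :=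
      (⟨C₁, hC₁card⟩, ⟨fun t => C₁.orderEmbOfFin hC₁card t,
        (C₁.orderEmbOfFin hC₁card).injective⟩) with hbaddef
    have hbad : bad ∉ Set.range Φ := by
      rintro ⟨σ, hσ⟩
      have hfst : C σ = C₁ := congrArg (fun p => p.1.1) hσ
      have hCfix : ∀ c ∈ C₁, σ.1 c = c := by
        intro c hc
        have : c ∈ Set.range (C₁.orderEmbOfFin hC₁card) := by
          rw [Finset.range_orderEmbOfFin]; exact_mod_cast hc
        obtain ⟨t, rfl⟩ := this
        have h2 := congrArg (fun p => p.2.toFun t) hσ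
        simp only [Φ, bad] at h2
        rwa [orderEmbOfFin_congr hfst (hC σ)] at h2
      have hAc : pick σ = C₁ᶜ := by
        have := congrArg (·ᶜ) hfst
        simpa [C, compl_compl] using this
      have himg : (pick σ).image ⇑σ.1 = (pick σ).image id := by
        have e2 : C₁.image ⇑σ.1 = C₁ := by
          rw [Finset.image_congr (g := id) (fun c hc => hCfix c hc)]
          simp
        calc (pick σ).image ⇑σ.1 = C₁ᶜ.image ⇑σ.1 := by rw [hAc]
          _ = (C₁.image ⇑σ.1)ᶜ := image_compl_perm _ _
          _ = C₁ᶜ := by rw [e2]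
          _ = (pick σ).image id := by rw [← hAc]; simp
      have hAfix := strictMonoOn_eq_of_image_eq (pick_mono σ)
        (fun a _ b _ hab => hab) himg
      have hσ1 : σ.1 = 1 := by
        apply Equiv.ext
        intro k
        by_cases hk : k ∈ pick σ
        · simpa using hAfix k hk
        · have : k ∈ C₁ := by rw [← hfst]; exact Finset.mem_compl.mpr hk
          simpa using hCfix k this
      have hσeq : σ = σ0 := Subtype.ext (by rw [hσ1])
      rw [hσeq] at hσ
      have : C σ0 = C₁ := congrArg (fun p => p.1.1) hσ
      exact hC₁ne this.symm
    rw [hncard, ← hTcard]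
    exact Fintype.card_lt_of_injective_of_notMem Φ hΦinj hbad

end GVAux

/-- Ulam distance: the least `m` such that `τ = σ τ₁ ⋯ τ_m` for translocations `τᵢ`. -/
noncomputable def ulamDist {n : ℕ} (σ τ : Equiv.Perm (Fin n)) : ℕ :=
  sInf {m | ∃ L : List (Equiv.Perm (Fin n)), L.length = m ∧
    (∀ x ∈ L, IsTranslocation x) ∧ τ = σ * L.prod}

namespace GVAux

lemma ball_strictMono {n Δ : ℕ} (σ : Equiv.Perm (Fin n)) (h : ulamDist 1 σ ≤ Δ) :
    ∃ A : Finset (Fin n), n ≤ A.card + Δ ∧ StrictMonoOn ⇑σ (A : Set (Fin n)) := by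
  have hne : {m | ∃ L : List (Equiv.Perm (Fin n)), L.length = m ∧
      (∀ x ∈ L, IsTranslocation x) ∧ σ = 1 * L.prod}.Nonempty := by
    obtain ⟨L, hL, hLp⟩ := exists_list_perm σ
    exact ⟨L.length, L, rfl, hL, by rw [one_mul]; exact hLp⟩
  have hmem := Nat.sInf_mem hne
  obtain ⟨L, hLlen, hLtr, hLp⟩ := hmem
  obtain ⟨A, hAcard, hA⟩ := exists_strictMonoOn_of_list L hLtr
  rw [one_mul] at hLp
  rw [← hLp] at hA
  refine ⟨A, ?_, hA⟩
  have hd : ulamDist 1 σ = sInf {m | ∃ L : List (Equiv.Perm (Fin n)), L.length = m ∧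
      (∀ x ∈ L, IsTranslocation x) ∧ σ = 1 * L.prod} := rfl
  rw [hd] at h
  omega

end GVAux

/-- Comparison of the Gilbert–Varshamov-type bound with the bound `(n-Δ)!/C(n,Δ)`:
the non-strict inequality holds for all `Δ ≤ n`, and the inequality is strict for
`0 < Δ < n - 1`. -/
theorem gv_vs_simple_bound (n Δ : ℕ) (hΔ : Δ ≤ n) :
    ((n - Δ).factorial : ℝ) / (n.choose Δ) ≤
        (n.factorial : ℝ) / ({σ : Equiv.Perm (Fin n) | ulamDist 1 σ ≤ Δ}.ncard) ∧
    (0 < Δ → Δ + 1 < n →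
      ((n - Δ).factorial : ℝ) / (n.choose Δ) <
        (n.factorial : ℝ) / ({σ : Equiv.Perm (Fin n) | ulamDist 1 σ ≤ Δ}.ncard)) := by
  classical
  set B : Set (Equiv.Perm (Fin n)) := {σ | ulamDist 1 σ ≤ Δ} with hBdef
  set P : Set (Equiv.Perm (Fin n)) :=
    {σ | ∃ A : Finset (Fin n), A.card = n - Δ ∧ StrictMonoOn ⇑σ (A : Set (Fin n))} with hPdef
  have hBP : B ⊆ P := by
    intro σ hσ
    obtain ⟨A, hAcard, hA⟩ := GVAux.ball_strictMono σ hσ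
    obtain ⟨A', hsub, hcard'⟩ := Finset.exists_subset_card_eq (show n - Δ ≤ A.card by omega)
    exact ⟨A', hcard', hA.mono (Finset.coe_subset.mpr hsub)⟩
  have h1B : (1 : Equiv.Perm (Fin n)) ∈ B := by
    have : (0 : ℕ) ∈ {m | ∃ L : List (Equiv.Perm (Fin n)), L.length = m ∧
        (∀ x ∈ L, IsTranslocation x) ∧ (1 : Equiv.Perm (Fin n)) = 1 * L.prod} :=
      ⟨[], rfl, fun x hx => absurd hx List.not_mem_nil, by simp⟩
    have h0 : ulamDist (1 : Equiv.Perm (Fin n)) 1 ≤ 0 := Nat.sInf_le this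
    exact le_trans h0 (Nat.zero_le Δ)
  have hBpos : 0 < B.ncard := by
    rw [Set.ncard_pos (Set.toFinite B)]
    exact ⟨1, h1B⟩
  have hBle : B.ncard ≤ P.ncard := Set.ncard_le_ncard hBP (Set.toFinite P)
  obtain ⟨hPle, hPlt⟩ := GVAux.count_bound n Δ hΔ
  have hchoose : 0 < n.choose Δ := Nat.choose_pos hΔ
  have hfact : (n.choose Δ) * Δ.factorial * (n - Δ).factorial = n.factorial :=
    Nat.choose_mul_factorial_mul_factorial hΔ
  have hkey : ∀ b : ℕ, 0 < b → b ≤ n.choose Δ * (Δ.factorial * n.choose Δ) →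
      ((n - Δ).factorial : ℝ) / (n.choose Δ) ≤ (n.factorial : ℝ) / b := by
    intro b hb hble
    rw [div_le_div_iff₀ (by exact_mod_cast hchoose) (by exact_mod_cast hb)]
    have h1 : ((n - Δ).factorial : ℝ) * b ≤
        ((n - Δ).factorial : ℝ) * (n.choose Δ * (Δ.factorial * n.choose Δ)) := by
      apply mul_le_mul_of_nonneg_left _ (by positivity)
      exact_mod_cast hble
    have h2 : ((n - Δ).factorial : ℝ) * (n.choose Δ * (Δ.factorial * n.choose Δ)) =
        (n.factorial : ℝ) * (n.choose Δ) := by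
      rw [← hfact]; push_cast; ring
    linarith
  have hkeylt : ∀ b : ℕ, 0 < b → b < n.choose Δ * (Δ.factorial * n.choose Δ) →
      ((n - Δ).factorial : ℝ) / (n.choose Δ) < (n.factorial : ℝ) / b := by
    intro b hb hble
    rw [div_lt_div_iff₀ (by exact_mod_cast hchoose) (by exact_mod_cast hb)]
    have h1 : ((n - Δ).factorial : ℝ) * b <
        ((n - Δ).factorial : ℝ) * (n.choose Δ * (Δ.factorial * n.choose Δ)) := by
      apply mul_lt_mul_of_pos_left _ (by positivity)
      exact_mod_cast hble
    have h2 : ((n - Δ).factorial : ℝ) * (n.choose Δ * (Δ.factorial * n.choose Δ)) =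
        (n.factorial : ℝ) * (n.choose Δ) := by
      rw [← hfact]; push_cast; ring
    linarith
  constructor
  · exact hkey B.ncard hBpos (le_trans hBle hPle)
  · intro h1 h2
    exact hkeylt B.ncard hBpos (lt_of_le_of_lt hBle (hPlt h1 h2))
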